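/- Let I ⊆ ℝ be an interval and α : I → C^∞(S¹) a smooth family of positive real-valued functions solving ∂α_τ/∂τ = −α_τ·(Λα_τ) + (𝓗α_τ)·(Dα_τ). Then ∫_{S¹} α_τ(θ)^{-1} dθ is independent of τ. -/

import Mathlib

/-- The Fourier mode `e^{inθ}` on the circle. -/
noncomputable def fm (n : ℤ) (θ : ℝ) : ℂ := Complex.exp ((n : ℂ) * (θ : ℂ) * Complex.I)

/- STATEMENT 12: a smooth family `α : I → C^∞(S¹)` of positive real functions, encoded
   by its Fourier coefficients `c τ n` (real: `c τ (−n) = conj (c τ n)`; smooth: the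
   coefficients and their τ-derivatives `c' τ n` decay rapidly, uniformly on `I = (a,b)`;
   positive: `Re α_τ(θ) > 0`), solving `∂α/∂τ = −α·(Λα) + (𝓗α)·(Dα)` pointwise.
   Then `∫_{S¹} α_τ(θ)⁻¹ dθ` is independent of `τ`.
   Here `α_τ(θ) = Σ_n c τ n e^{inθ}`, `Λα_τ = Σ |n| (c τ n) e^{inθ}`,
   `𝓗α_τ = Σ sgn(n) (c τ n) e^{inθ}`, `Dα_τ = Σ n (c τ n) e^{inθ}`. -/
open Complex Set

lemma fm_norm (n : ℤ) (θ : ℝ) : ‖fm n θ‖ = 1 := by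
  simp only [fm, Complex.norm_exp]
  norm_num [Complex.mul_I_re, Complex.mul_re]

lemma fm_periodic (n : ℤ) : Function.Periodic (fm n) (2 * Real.pi) := by
  intro θ
  simp only [fm]
  push_cast
  have : ((n : ℂ) * (↑θ + 2 * ↑Real.pi)) * Complex.I
      = (n : ℂ) * ↑θ * Complex.I + (n : ℂ) * (2 * ↑Real.pi * Complex.I) := by ring
  rw [this, Complex.exp_add, Complex.exp_int_mul_two_pi_mul_I, mul_one]

lemma hasDerivAt_fm (n : ℤ) (θ : ℝ) :
    HasDerivAt (fm n) ((n : ℂ) * Complex.I * fm n θ) θ := by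
  have h0 : HasDerivAt (fun θ : ℝ => (θ : ℂ)) 1 θ := by
    exact Complex.ofRealCLM.hasDerivAt (x := θ)
  have h1 : HasDerivAt (fun θ : ℝ => (n : ℂ) * (θ : ℂ) * Complex.I)
      ((n : ℂ) * 1 * Complex.I) θ := (h0.const_mul _).mul_const _
  have h2 := h1.cexp
  have : Complex.exp ((n : ℂ) * (θ : ℂ) * Complex.I) * ((n : ℂ) * 1 * Complex.I)
      = (n : ℂ) * Complex.I * fm n θ := by rw [fm]; ring
  rw [this] at h2
  exact h2

lemma summable_w2 : Summable (fun n : ℤ => ((1 + |(n : ℝ)|) ^ 2)⁻¹) := by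
  have h : Summable (fun k : ℕ => (((k : ℝ)) ^ 2)⁻¹) := Real.summable_nat_pow_inv.mpr one_lt_two
  have h2 := h.comp_injective (add_right_injective 1)
  apply Summable.of_nat_of_neg
  · apply h2.congr
    intro k
    have : |((k : ℤ) : ℝ)| = (k : ℝ) := by
      rw [Int.cast_natCast]; exact abs_of_nonneg (Nat.cast_nonneg k)
    rw [this]
    simp only [Function.comp_apply]
    push_cast
    ring
  · apply h2.congr
    intro k
    have : |((-(k : ℤ) : ℤ) : ℝ)| = (k : ℝ) := by
      push_cast; rw [abs_neg]; exact abs_of_nonneg (Nat.cast_nonneg k)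
    rw [this]
    simp only [Function.comp_apply]
    push_cast
    ring

lemma fm_continuous (n : ℤ) : Continuous (fm n) := by
  unfold fm; fun_prop

section

variable {d : ℤ → ℂ} {C : ℝ}

noncomputable def S2 : ℝ := ∑' n : ℤ, ((1 + |(n : ℝ)|) ^ 2)⁻¹

lemma decay_nonneg (h : ∀ n, ‖d n‖ ≤ C * ((1 + |(n : ℝ)|) ^ 2)⁻¹) : 0 ≤ C := by
  have := (norm_nonneg (d 0)).trans (h 0)
  simpa using this

lemma decay_nonneg3 (h : ∀ n, ‖d n‖ ≤ C * ((1 + |(n : ℝ)|) ^ 3)⁻¹) : 0 ≤ C := by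
  have := (norm_nonneg (d 0)).trans (h 0)
  simpa using this

lemma decay_three_to_two (h : ∀ n, ‖d n‖ ≤ C * ((1 + |(n : ℝ)|) ^ 3)⁻¹) :
    ∀ n, ‖d n‖ ≤ C * ((1 + |(n : ℝ)|) ^ 2)⁻¹ := by
  intro n
  refine (h n).trans ?_
  have h1 : (0:ℝ) < 1 + |(n : ℝ)| := by positivity
  refine mul_le_mul_of_nonneg_left ?_ (decay_nonneg3 h)
  gcongr
  · have := abs_nonneg ((n:ℝ)); linarith
  · norm_num

lemma summable_mul_fm (h : ∀ n, ‖d n‖ ≤ C * ((1 + |(n : ℝ)|) ^ 2)⁻¹) (θ : ℝ) :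
    Summable fun n : ℤ => d n * fm n θ := by
  apply Summable.of_norm
  apply Summable.of_nonneg_of_le (fun n => norm_nonneg _) (fun n => ?_) (summable_w2.mul_left C)
  rw [norm_mul, fm_norm, mul_one]; exact h n

lemma norm_tsum_mul_fm_le (h : ∀ n, ‖d n‖ ≤ C * ((1 + |(n : ℝ)|) ^ 2)⁻¹) (θ : ℝ) :
    ‖∑' n : ℤ, d n * fm n θ‖ ≤ C * S2 := by
  have hs : Summable fun n : ℤ => ‖d n * fm n θ‖ := by
    apply Summable.of_nonneg_of_le (fun n => norm_nonneg _) (fun n => ?_) (summable_w2.mul_left C)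
    rw [norm_mul, fm_norm, mul_one]; exact h n
  calc ‖∑' n : ℤ, d n * fm n θ‖ ≤ ∑' n : ℤ, ‖d n * fm n θ‖ := norm_tsum_le_tsum_norm hs
    _ ≤ ∑' n : ℤ, C * ((1 + |(n : ℝ)|) ^ 2)⁻¹ := by
        apply Summable.tsum_le_tsum (fun n => ?_) hs (summable_w2.mul_left C)
        rw [norm_mul, fm_norm, mul_one]; exact h n
    _ = C * S2 := by rw [S2, tsum_mul_left]

lemma continuous_tsum_mul_fm (h : ∀ n, ‖d n‖ ≤ C * ((1 + |(n : ℝ)|) ^ 2)⁻¹) :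
    Continuous fun θ : ℝ => ∑' n : ℤ, d n * fm n θ := by
  apply continuous_tsum (u := fun n : ℤ => C * ((1 + |(n : ℝ)|) ^ 2)⁻¹)
  · exact fun n => continuous_const.mul (fm_continuous n)
  · exact summable_w2.mul_left C
  · intro n θ; rw [norm_mul, fm_norm, mul_one]; exact h n

lemma periodic_tsum_mul_fm :
    Function.Periodic (fun θ : ℝ => ∑' n : ℤ, d n * fm n θ) (2 * Real.pi) := by
  intro θ
  exact tsum_congr fun n => by rw [fm_periodic n θ]

lemma hasDerivAt_tsum_mul_fm (h3 : ∀ n, ‖d n‖ ≤ C * ((1 + |(n : ℝ)|) ^ 3)⁻¹) (θ : ℝ) :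
    HasDerivAt (fun θ : ℝ => ∑' n : ℤ, d n * fm n θ)
      (∑' n : ℤ, (n : ℂ) * Complex.I * d n * fm n θ) θ := by
  have hC : 0 ≤ C := decay_nonneg3 h3
  have key : ∀ (n : ℤ) (y : ℝ),
      HasDerivAt (fun θ : ℝ => d n * fm n θ) ((n : ℂ) * Complex.I * d n * fm n y) y := by
    intro n y
    have h := (hasDerivAt_fm n y).const_mul (d n)
    rw [show (n : ℂ) * Complex.I * d n * fm n y = d n * ((n : ℂ) * Complex.I * fm n y) by ring]; exact h
  apply hasDerivAt_tsum (u := fun n : ℤ => C * ((1 + |(n : ℝ)|) ^ 2)⁻¹)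
    (summable_w2.mul_left C) key ?_ (summable_mul_fm (decay_three_to_two h3) θ) θ
  intro n y
  have h1 : (0:ℝ) < 1 + |(n : ℝ)| := by positivity
  have e1 : ‖(n : ℂ) * Complex.I * d n * fm n y‖ = |(n : ℝ)| * ‖d n‖ := by
    rw [norm_mul, fm_norm, mul_one, norm_mul, norm_mul, Complex.norm_I, mul_one]
    norm_num
  rw [e1]
  calc |(n : ℝ)| * ‖d n‖ ≤ (1 + |(n : ℝ)|) * (C * ((1 + |(n : ℝ)|) ^ 3)⁻¹) := by
        apply mul_le_mul (by linarith) (h3 n) (norm_nonneg _) (by linarith)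
    _ = C * ((1 + |(n : ℝ)|) ^ 2)⁻¹ := by field_simp

end

lemma norm_sign_le (n : ℤ) : ‖((Int.sign n : ℂ))‖ ≤ 1 := by
  have h1 : Int.sign n = -1 ∨ Int.sign n = 0 ∨ Int.sign n = 1 := by
    rcases lt_trichotomy n 0 with h | h | h
    · left; rwa [Int.sign_eq_neg_one_iff_neg]
    · right; left; simp [h]
    · right; right; rwa [Int.sign_eq_one_iff_pos]
  rcases h1 with h | h | h <;> simp [h]

lemma cast_mul_sign (n : ℤ) : (n : ℂ) * ((Int.sign n : ℂ)) = ((|n| : ℤ) : ℂ) := by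
  rw [← Int.cast_mul, Int.mul_sign_self, Int.abs_eq_natAbs]

theorem stmt_12 (a b : ℝ) (c c' : ℝ → ℤ → ℂ)
    (hreal : ∀ τ ∈ Set.Ioo a b, ∀ n : ℤ, c τ (-n) = (starRingEnd ℂ) (c τ n))
    (hbound : ∀ m : ℕ, ∃ C : ℝ, ∀ τ ∈ Set.Ioo a b, ∀ n : ℤ,
      ((1 + |n| : ℝ)) ^ m * (‖c τ n‖ + ‖c' τ n‖) ≤ C)
    (hderiv : ∀ τ ∈ Set.Ioo a b, ∀ n : ℤ, HasDerivAt (fun t => c t n) (c' τ n) τ)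
    (hpos : ∀ τ ∈ Set.Ioo a b, ∀ θ : ℝ, 0 < (∑' n : ℤ, c τ n * fm n θ).re)
    (hPDE : ∀ τ ∈ Set.Ioo a b, ∀ θ : ℝ,
      (∑' n : ℤ, c' τ n * fm n θ) =
        -(∑' n : ℤ, c τ n * fm n θ) * (∑' n : ℤ, ((|n| : ℤ) : ℂ) * c τ n * fm n θ)
          + (∑' n : ℤ, (Int.sign n : ℂ) * c τ n * fm n θ) *
            (∑' n : ℤ, (n : ℂ) * c τ n * fm n θ)) :
    ∀ τ₁ ∈ Set.Ioo a b, ∀ τ₂ ∈ Set.Ioo a b,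
      (∫ θ in (0:ℝ)..(2 * Real.pi), (∑' n : ℤ, c τ₁ n * fm n θ)⁻¹) =
        ∫ θ in (0:ℝ)..(2 * Real.pi), (∑' n : ℤ, c τ₂ n * fm n θ)⁻¹ := by
  -- extract uniform decay bounds
  obtain ⟨C₂, hC₂⟩ := hbound 2
  obtain ⟨C₃, hC₃⟩ := hbound 3
  have hextract : ∀ (C : ℝ) (m : ℕ),
      (∀ τ ∈ Set.Ioo a b, ∀ n : ℤ, ((1 + |n| : ℝ)) ^ m * (‖c τ n‖ + ‖c' τ n‖) ≤ C) →
      ∀ τ ∈ Set.Ioo a b, ∀ n : ℤ,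
        ‖c τ n‖ ≤ C * ((1 + |(n : ℝ)|) ^ m)⁻¹ ∧ ‖c' τ n‖ ≤ C * ((1 + |(n : ℝ)|) ^ m)⁻¹ := by
    intro C m h τ hτ n
    have hX : (0:ℝ) < (1 + |(n : ℝ)|) ^ m := by positivity
    have h1 := h τ hτ n
    rw [show ((|n| : ℤ) : ℝ) = |(n : ℝ)| by push_cast; ring] at h1
    have h2 : (1 + |(n : ℝ)|) ^ m * ‖c τ n‖ ≤ C := by
      refine le_trans ?_ h1
      have := norm_nonneg (c' τ n)
      nlinarith [norm_nonneg (c τ n)]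
    have h3 : (1 + |(n : ℝ)|) ^ m * ‖c' τ n‖ ≤ C := by
      refine le_trans ?_ h1
      nlinarith [norm_nonneg (c τ n), norm_nonneg (c' τ n)]
    constructor
    · calc ‖c τ n‖ = ((1 + |(n : ℝ)|) ^ m)⁻¹ * ((1 + |(n : ℝ)|) ^ m * ‖c τ n‖) := by
            field_simp
        _ ≤ ((1 + |(n : ℝ)|) ^ m)⁻¹ * C :=
            mul_le_mul_of_nonneg_left h2 (inv_nonneg.mpr hX.le)
        _ = C * ((1 + |(n : ℝ)|) ^ m)⁻¹ := mul_comm _ _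
    · calc ‖c' τ n‖ = ((1 + |(n : ℝ)|) ^ m)⁻¹ * ((1 + |(n : ℝ)|) ^ m * ‖c' τ n‖) := by
            field_simp
        _ ≤ ((1 + |(n : ℝ)|) ^ m)⁻¹ * C :=
            mul_le_mul_of_nonneg_left h3 (inv_nonneg.mpr hX.le)
        _ = C * ((1 + |(n : ℝ)|) ^ m)⁻¹ := mul_comm _ _
  have hc2 : ∀ τ ∈ Set.Ioo a b, ∀ n : ℤ, ‖c τ n‖ ≤ C₂ * ((1 + |(n : ℝ)|) ^ 2)⁻¹ :=
    fun τ hτ n => (hextract C₂ 2 hC₂ τ hτ n).1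
  have hc'2 : ∀ τ ∈ Set.Ioo a b, ∀ n : ℤ, ‖c' τ n‖ ≤ C₂ * ((1 + |(n : ℝ)|) ^ 2)⁻¹ :=
    fun τ hτ n => (hextract C₂ 2 hC₂ τ hτ n).2
  have hc3 : ∀ τ ∈ Set.Ioo a b, ∀ n : ℤ, ‖c τ n‖ ≤ C₃ * ((1 + |(n : ℝ)|) ^ 3)⁻¹ :=
    fun τ hτ n => (hextract C₃ 3 hC₃ τ hτ n).1
  -- the family and nonvanishing
  set al : ℝ → ℝ → ℂ := fun t θ => ∑' n : ℤ, c t n * fm n θ with hal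
  have hne0 : ∀ t ∈ Set.Ioo a b, ∀ θ : ℝ, al t θ ≠ 0 := by
    intro t ht θ h0
    have := hpos t ht θ
    rw [show (∑' n : ℤ, c t n * fm n θ) = al t θ from rfl, h0] at this
    simp at this
  set F : ℝ → ℂ := fun t => ∫ θ in (0:ℝ)..(2 * Real.pi), (al t θ)⁻¹ with hFdef
  -- main step : F has derivative 0 on Ioo a b
  have key : ∀ τ₀ ∈ Set.Ioo a b, HasDerivAt F 0 τ₀ := by
    intro τ₀ hτ₀
    set δ : ℝ := min (τ₀ - a) (b - τ₀) / 2 with hδdef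
    have hδ : 0 < δ := by
      have h1 : 0 < τ₀ - a := by linarith [hτ₀.1]
      have h2 : 0 < b - τ₀ := by linarith [hτ₀.2]
      have := lt_min h1 h2
      positivity
    have hKsub : Set.Icc (τ₀ - δ) (τ₀ + δ) ⊆ Set.Ioo a b := by
      intro x hx
      have h1 := min_le_left (τ₀ - a) (b - τ₀)
      have h2 := min_le_right (τ₀ - a) (b - τ₀)
      constructor
      · have := hx.1; simp only [hδdef] at this ⊢; linarith
      · have := hx.2; simp only [hδdef] at this ⊢; linarith
    have hball : Metric.ball τ₀ δ ⊆ Set.Icc (τ₀ - δ) (τ₀ + δ) := by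
      intro x hx
      rw [Real.ball_eq_Ioo] at hx
      exact Set.Ioo_subset_Icc_self hx
    have hballIoo : Metric.ball τ₀ δ ⊆ Set.Ioo a b := fun x hx => hKsub (hball hx)
    -- joint continuity on the compact rectangle
    have hcont2 : ContinuousOn (fun p : ℝ × ℝ => al p.1 p.2)
        (Set.Icc (τ₀ - δ) (τ₀ + δ) ×ˢ (Set.univ : Set ℝ)) := by
      apply continuousOn_tsum (u := fun n : ℤ => C₂ * ((1 + |(n : ℝ)|) ^ 2)⁻¹)
      · intro n
        apply ContinuousOn.mul
        · intro p hp
          have hc : ContinuousAt (fun t => c t n) p.1 :=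
            (hderiv p.1 (hKsub hp.1) n).continuousAt
          exact (hc.comp (continuousAt_fst)).continuousWithinAt
        · exact ((fm_continuous n).comp continuous_snd).continuousOn
      · exact summable_w2.mul_left C₂
      · intro n p hp
        rw [norm_mul, fm_norm, mul_one]
        exact hc2 p.1 (hKsub hp.1) n
    -- uniform lower bound on the compact rectangle
    set K : Set (ℝ × ℝ) := Set.Icc (τ₀ - δ) (τ₀ + δ) ×ˢ Set.Icc (0:ℝ) (2 * Real.pi) with hK
    have hKcpt : IsCompact K := isCompact_Icc.prod isCompact_Icc
    have hKne : K.Nonempty := by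
      refine ⟨(τ₀, 0), ?_, ?_⟩
      · exact ⟨by linarith, by linarith⟩
      · exact ⟨le_refl 0, by positivity⟩
    have hcontRe : ContinuousOn (fun p : ℝ × ℝ => (al p.1 p.2).re) K := by
      apply Complex.continuous_re.comp_continuousOn
      apply hcont2.mono
      intro p hp
      exact ⟨hp.1, trivial⟩
    obtain ⟨p₀, hp₀K, hp₀min⟩ := hKcpt.exists_isMinOn hKne hcontRe
    set ε₀ : ℝ := (al p₀.1 p₀.2).re with hε₀def
    have hε₀pos : 0 < ε₀ := hpos p₀.1 (hKsub hp₀K.1) p₀.2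
    have hlow : ∀ t ∈ Set.Icc (τ₀ - δ) (τ₀ + δ), ∀ θ ∈ Set.Icc (0:ℝ) (2 * Real.pi),
        ε₀ ≤ ‖al t θ‖ := by
      intro t ht θ hθ
      have h1 : ε₀ ≤ (al t θ).re := hp₀min (Set.mk_mem_prod ht hθ)
      calc ε₀ ≤ (al t θ).re := h1
        _ ≤ |(al t θ).re| := le_abs_self _
        _ ≤ ‖al t θ‖ := Complex.abs_re_le_norm _
    -- derivative under the integral sign
    set G : ℝ → ℝ → ℂ := fun t θ => -(∑' n : ℤ, c' t n * fm n θ) / (al t θ) ^ 2 with hGdef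
    have htderiv : ∀ t ∈ Set.Ioo a b, ∀ θ : ℝ,
        HasDerivAt (fun s => al s θ) (∑' n : ℤ, c' t n * fm n θ) t := by
      intro t ht θ
      apply hasDerivAt_tsum_of_isPreconnected
        (u := fun n : ℤ => C₂ * ((1 + |(n : ℝ)|) ^ 2)⁻¹)
        (summable_w2.mul_left C₂) isOpen_Ioo isPreconnected_Ioo
        (fun n y hy => (hderiv y hy n).mul_const (fm n θ))
        (fun n y hy => by rw [norm_mul, fm_norm, mul_one]; exact hc'2 y hy n)
        hτ₀ (summable_mul_fm (hc2 τ₀ hτ₀) θ) ht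
    have h_diff : ∀ θ : ℝ, ∀ t ∈ Metric.ball τ₀ δ,
        HasDerivAt (fun s => (al s θ)⁻¹) (G t θ) t := by
      intro θ t ht
      have htIoo := hballIoo ht
      have h1 := (hasDerivAt_const t (1:ℂ)).div (htderiv t htIoo θ) (hne0 t htIoo θ)
      simp only [Pi.div_def, one_div] at h1
      have e : G t θ = (0 * al t θ - 1 * ∑' n : ℤ, c' t n * fm n θ) / al t θ ^ 2 := by
        simp only [hGdef]
        ring
      rw [e]; exact h1
    have hS2nn : (0:ℝ) ≤ S2 := tsum_nonneg (fun n => by positivity)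
    have hC₂nn : 0 ≤ C₂ := decay_nonneg (hc'2 τ₀ hτ₀)
    have h_bound : ∀ θ ∈ Set.Icc (0:ℝ) (2 * Real.pi), ∀ t ∈ Metric.ball τ₀ δ,
        ‖G t θ‖ ≤ C₂ * S2 / ε₀ ^ 2 := by
      intro θ hθ t ht
      have htIoo := hballIoo ht
      have hnum : ‖∑' n : ℤ, c' t n * fm n θ‖ ≤ C₂ * S2 :=
        norm_tsum_mul_fm_le (hc'2 t htIoo) θ
      have hden : ε₀ ≤ ‖al t θ‖ := hlow t (hball ht) θ hθ
      have e1 : ‖G t θ‖ = ‖∑' n : ℤ, c' t n * fm n θ‖ / ‖al t θ‖ ^ 2 := by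
        rw [hGdef]; rw [norm_div, norm_neg, norm_pow]
      rw [e1]
      apply div_le_div₀ (by positivity) hnum (by positivity)
      exact pow_le_pow_left₀ hε₀pos.le hden 2
    have hmeas : ∀ᶠ t in nhds τ₀,
        MeasureTheory.AEStronglyMeasurable (fun θ => (al t θ)⁻¹)
          (MeasureTheory.volume.restrict (Set.uIoc (0:ℝ) (2 * Real.pi))) := by
      apply Filter.eventually_of_mem (Metric.ball_mem_nhds τ₀ hδ)
      intro t ht
      have htIoo := hballIoo ht
      exact ((continuous_tsum_mul_fm (hc2 t htIoo)).inv₀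
        (fun θ => hne0 t htIoo θ)).aestronglyMeasurable
    have hcontG : Continuous (G τ₀) := by
      apply Continuous.div
      · exact (continuous_tsum_mul_fm (hc'2 τ₀ hτ₀)).neg
      · exact (continuous_tsum_mul_fm (hc2 τ₀ hτ₀)).pow 2
      · exact fun θ => pow_ne_zero 2 (hne0 τ₀ hτ₀ θ)
    have hFint : IntervalIntegrable (fun θ => (al τ₀ θ)⁻¹)
        MeasureTheory.volume 0 (2 * Real.pi) :=
      ((continuous_tsum_mul_fm (hc2 τ₀ hτ₀)).inv₀
        (fun θ => hne0 τ₀ hτ₀ θ)).intervalIntegrable _ _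
    obtain ⟨-, hF⟩ := intervalIntegral.hasDerivAt_integral_of_dominated_loc_of_deriv_le (Metric.ball_mem_nhds τ₀ hδ)
      hmeas hFint hcontG.aestronglyMeasurable
      (Filter.Eventually.of_forall (fun θ hθ t ht => by
        refine h_bound θ ?_ t ht
        rw [Set.uIoc_of_le (by positivity)] at hθ
        exact Set.Ioc_subset_Icc_self hθ))
      (intervalIntegrable_const)
      (Filter.Eventually.of_forall (fun θ _ t ht => h_diff θ t ht))
    -- show the derivative integral vanishes
    have hzero : (∫ θ in (0:ℝ)..(2 * Real.pi), G τ₀ θ) = 0 := by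
      set g : ℝ → ℂ :=
        fun θ => ∑' n : ℤ, (Complex.I * ((Int.sign n : ℂ)) * c τ₀ n) * fm n θ with hgdef
      have hgb3 : ∀ n : ℤ, ‖Complex.I * ((Int.sign n : ℂ)) * c τ₀ n‖
          ≤ C₃ * ((1 + |(n : ℝ)|) ^ 3)⁻¹ := by
        intro n
        rw [norm_mul, norm_mul, Complex.norm_I, one_mul]
        calc ‖((Int.sign n : ℂ))‖ * ‖c τ₀ n‖ ≤ 1 * ‖c τ₀ n‖ :=
              mul_le_mul_of_nonneg_right (norm_sign_le n) (norm_nonneg _)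
          _ = ‖c τ₀ n‖ := one_mul _
          _ ≤ _ := hc3 τ₀ hτ₀ n
      -- h = g/α with derivative -G τ₀
      have hder : ∀ θ : ℝ, HasDerivAt (fun θ => g θ / al τ₀ θ) (-(G τ₀ θ)) θ := by
        intro θ
        have hgd := hasDerivAt_tsum_mul_fm hgb3 θ
        have had := hasDerivAt_tsum_mul_fm (hc3 τ₀ hτ₀) θ
        have hdiv := hgd.div had (hne0 τ₀ hτ₀ θ)
        -- rewrite the numerator using the PDE
        have e_gd : (∑' n : ℤ, (n : ℂ) * Complex.I *
              (Complex.I * ((Int.sign n : ℂ)) * c τ₀ n) * fm n θ)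
            = -∑' n : ℤ, ((|n| : ℤ) : ℂ) * c τ₀ n * fm n θ := by
          rw [← tsum_neg]
          apply tsum_congr
          intro n
          have h2 := cast_mul_sign n
          calc (n : ℂ) * Complex.I * (Complex.I * ((Int.sign n : ℂ)) * c τ₀ n) * fm n θ
              = ((n : ℂ) * ((Int.sign n : ℂ))) * (Complex.I * Complex.I) * c τ₀ n * fm n θ := by
                ring
            _ = -(((|n| : ℤ) : ℂ) * c τ₀ n * fm n θ) := by rw [h2, Complex.I_mul_I]; ring
        have e_g : g θ = Complex.I * ∑' n : ℤ, (Int.sign n : ℂ) * c τ₀ n * fm n θ := by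
          rw [hgdef, ← tsum_mul_left]
          exact tsum_congr fun n => by ring
        have e_ad : (∑' n : ℤ, (n : ℂ) * Complex.I * c τ₀ n * fm n θ)
            = Complex.I * ∑' n : ℤ, (n : ℂ) * c τ₀ n * fm n θ := by
          rw [← tsum_mul_left]
          exact tsum_congr fun n => by ring
        have hnum : (∑' n : ℤ, (n : ℂ) * Complex.I *
              (Complex.I * ((Int.sign n : ℂ)) * c τ₀ n) * fm n θ) * al τ₀ θ
            - g θ * (∑' n : ℤ, (n : ℂ) * Complex.I * c τ₀ n * fm n θ)
            = ∑' n : ℤ, c' τ₀ n * fm n θ := by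
          rw [e_gd, e_g, e_ad, hPDE τ₀ hτ₀ θ]
          have hI : Complex.I * Complex.I = -1 := Complex.I_mul_I
          rw [hal]
          ring_nf
          rw [Complex.I_sq]
          ring
        rw [hnum] at hdiv
        have : (∑' n : ℤ, c' τ₀ n * fm n θ) / al τ₀ θ ^ 2 = -(G τ₀ θ) := by
          simp only [hGdef]
          rw [neg_div, neg_neg]
        rw [this] at hdiv
        exact hdiv
      have hcontdG : Continuous (fun θ => -(G τ₀ θ)) := hcontG.neg
      have hFTC := intervalIntegral.integral_eq_sub_of_hasDerivAt
        (a := (0:ℝ)) (b := 2 * Real.pi)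
        (f := fun θ => g θ / al τ₀ θ) (f' := fun θ => -(G τ₀ θ))
        (fun θ _ => hder θ) (hcontdG.intervalIntegrable _ _)
      have hper : g (2 * Real.pi) / al τ₀ (2 * Real.pi) = g 0 / al τ₀ 0 := by
        have h1 : g (2 * Real.pi) = g 0 := by
          have := (periodic_tsum_mul_fm
            (d := fun n => Complex.I * ((Int.sign n : ℂ)) * c τ₀ n)) 0
          simpa using this
        have h2 : al τ₀ (2 * Real.pi) = al τ₀ 0 := by
          have := (periodic_tsum_mul_fm (d := fun n => c τ₀ n)) 0
          simpa using this
        rw [h1, h2]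
      rw [intervalIntegral.integral_neg] at hFTC
      beta_reduce at hFTC
      rw [hper, sub_self] at hFTC
      exact neg_eq_zero.mp hFTC
    rw [hzero] at hF
    exact hF
  -- conclude constancy
  have main : ∀ s ∈ Set.Ioo a b, ∀ t ∈ Set.Ioo a b, s ≤ t → F t = F s := by
    intro s hs t ht hst
    have hsub : Set.Icc s t ⊆ Set.Ioo a b := fun x hx => ⟨lt_of_lt_of_le hs.1 hx.1,
      lt_of_le_of_lt hx.2 ht.2⟩
    have := constant_of_has_deriv_right_zero (f := F) (a := s) (b := t)
      (fun x hx => ((key x (hsub hx)).continuousAt.continuousWithinAt))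
      (fun x hx => (key x (hsub (Set.Ico_subset_Icc_self hx))).hasDerivWithinAt)
    exact this t (Set.right_mem_Icc.mpr hst)
  intro τ₁ hτ₁ τ₂ hτ₂
  rcases le_total τ₁ τ₂ with h | h
  · exact (main τ₁ hτ₁ τ₂ hτ₂ h).symm
  · exact main τ₂ hτ₂ τ₁ hτ₁ h
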